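/- Let A be an associative unital ℂ-algebra, ħ ∈ ℂ, h = 2iħ, and let x, y, z ∈ A satisfy xy − yx = hz, yz − zy = hx, zx − xz = hy. Suppose r ∈ A is an invertible central element (commuting with x, y, z) with r² = x² + y² + z² + ħ²·1. In Mat_4(A), with M_x = E_{12} − E_{21} − E_{34} + E_{43}, M_y = E_{13} + E_{24} − E_{31} − E_{42}, M_z = E_{14} − E_{23} + E_{32} − E_{41}, define X = x·I₄ + iħ·M_x, Y = y·I₄ + iħ·M_y, Z = z·I₄ + iħ·M_z, N = x·M_x + y·M_y + z·M_z, and R = (r² + ħ²)r⁻¹·I₄ + iħ·r⁻¹·N. Then R commutes with X, Y, and Z, and R² = X² + Y² + Z² + ħ²·I₄. -/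

import Mathlib

open Complex

lemma qr_one_eq {A : Type*} [Ring A] : (1 : Matrix (Fin 4) (Fin 4) A) =
    Matrix.single 0 0 1 + Matrix.single 1 1 1 +
    Matrix.single 2 2 1 + Matrix.single 3 3 1 := by
  ext i j
  fin_cases i <;> fin_cases j <;> simp [Matrix.single, Matrix.one_apply]

lemma qr_smul_mul {A : Type*} [Ring A] (a b : A) (M N : Matrix (Fin 4) (Fin 4) A)
    (hM : ∀ i j c, M i j * c = c * M i j) :
    (a • M) * (b • N) = (a * b) • (M * N) := by
  ext i j
  simp only [Matrix.mul_apply, Matrix.smul_apply, smul_eq_mul, Finset.mul_sum]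
  refine Finset.sum_congr rfl fun k _ => ?_
  calc a * M i k * (b * N k j) = a * ((M i k * b) * N k j) := by noncomm_ring
    _ = a * ((b * M i k) * N k j) := by rw [hM]
    _ = a * b * (M i k * N k j) := by noncomm_ring

lemma qr_quat_mul {A : Type*} [Ring A] (Mx My Mz : Matrix (Fin 4) (Fin 4) A)
    (cMx : ∀ i j c, Mx i j * c = c * Mx i j)
    (cMy : ∀ i j c, My i j * c = c * My i j)
    (cMz : ∀ i j c, Mz i j * c = c * Mz i j)
    (hxx : Mx * Mx = -1) (hyy : My * My = -1) (hzz : Mz * Mz = -1)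
    (hxy : Mx * My = Mz) (hyx : My * Mx = -Mz) (hyz : My * Mz = Mx)
    (hzy : Mz * My = -Mx) (hzx : Mz * Mx = My) (hxz : Mx * Mz = -My)
    (c0 c1 c2 c3 d0 d1 d2 d3 : A) :
    (c0 • (1 : Matrix (Fin 4) (Fin 4) A) + c1 • Mx + c2 • My + c3 • Mz) *
      (d0 • (1 : Matrix (Fin 4) (Fin 4) A) + d1 • Mx + d2 • My + d3 • Mz)
    = (c0 * d0 - c1 * d1 - c2 * d2 - c3 * d3) • (1 : Matrix (Fin 4) (Fin 4) A)
      + (c0 * d1 + c1 * d0 + c2 * d3 - c3 * d2) • Mx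
      + (c0 * d2 + c2 * d0 + c3 * d1 - c1 * d3) • My
      + (c0 * d3 + c3 * d0 + c1 * d2 - c2 * d1) • Mz := by
  have c1' : ∀ i j c, (1 : Matrix (Fin 4) (Fin 4) A) i j * c
      = c * (1 : Matrix (Fin 4) (Fin 4) A) i j := by
    intro i j c
    by_cases h : i = j <;> simp [Matrix.one_apply, h]
  simp only [add_mul, mul_add]
  simp only [qr_smul_mul _ _ _ _ c1', qr_smul_mul _ _ _ _ cMx, qr_smul_mul _ _ _ _ cMy,
    qr_smul_mul _ _ _ _ cMz]
  simp only [Matrix.mul_one, Matrix.one_mul, hxx, hyy, hzz, hxy, hyx, hyz, hzy, hzx, hxz,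
    smul_neg, sub_smul, add_smul]
  abel

set_option maxHeartbeats 3200000 in
/-- The matrix `R = ((r² + ħ²)/r)·I + (iħ/r)·N`, encoding the extension of the quantum
partial derivatives to the quantum radius `r`, commutes with `X, Y, Z` (the images of the
generators under the multiplicative map `𝔥̂`) and satisfies `R² = X² + Y² + Z² + ħ²·I`. -/
theorem quantum_radius_matrix_identities
    {A : Type*} [Ring A] [Algebra ℂ A] (hbar : ℂ) (x y z r rinv : A)
    (hxy : x * y - y * x = (2 * Complex.I * hbar) • z)
    (hyz : y * z - z * y = (2 * Complex.I * hbar) • x)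
    (hzx : z * x - x * z = (2 * Complex.I * hbar) • y)
    (hrx : r * x = x * r) (hry : r * y = y * r) (hrz : r * z = z * r)
    (hrinv : r * rinv = 1) (hinvr : rinv * r = 1)
    (hr2 : r ^ 2 = x ^ 2 + y ^ 2 + z ^ 2 + (hbar ^ 2) • (1 : A))
    (Mx My Mz N X Y Z R : Matrix (Fin 4) (Fin 4) A)
    (hMx : Mx = Matrix.single 0 1 (1 : A) - Matrix.single 1 0 (1 : A)
      - Matrix.single 2 3 (1 : A) + Matrix.single 3 2 (1 : A))
    (hMy : My = Matrix.single 0 2 (1 : A) + Matrix.single 1 3 (1 : A)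
      - Matrix.single 2 0 (1 : A) - Matrix.single 3 1 (1 : A))
    (hMz : Mz = Matrix.single 0 3 (1 : A) - Matrix.single 1 2 (1 : A)
      + Matrix.single 2 1 (1 : A) - Matrix.single 3 0 (1 : A))
    (hX : X = x • (1 : Matrix (Fin 4) (Fin 4) A) + (Complex.I * hbar) • Mx)
    (hY : Y = y • (1 : Matrix (Fin 4) (Fin 4) A) + (Complex.I * hbar) • My)
    (hZ : Z = z • (1 : Matrix (Fin 4) (Fin 4) A) + (Complex.I * hbar) • Mz)
    (hN : N = x • Mx + y • My + z • Mz)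
    (hR : R = ((r ^ 2 + (hbar ^ 2) • (1 : A)) * rinv) • (1 : Matrix (Fin 4) (Fin 4) A)
      + (Complex.I * hbar) • (rinv • N)) :
    R * X = X * R ∧ R * Y = Y * R ∧ R * Z = Z * R ∧
      R ^ 2 = X ^ 2 + Y ^ 2 + Z ^ 2 + (hbar ^ 2) • (1 : Matrix (Fin 4) (Fin 4) A) := by
  -- centrality of the entries of Mx, My, Mz
  have cMx : ∀ i j c, Mx i j * c = c * Mx i j := by
    simp only [hMx]; intro i j c
    fin_cases i <;> fin_cases j <;> simp [Matrix.single]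
  have cMy : ∀ i j c, My i j * c = c * My i j := by
    simp only [hMy]; intro i j c
    fin_cases i <;> fin_cases j <;> simp [Matrix.single]
  have cMz : ∀ i j c, Mz i j * c = c * Mz i j := by
    simp only [hMz]; intro i j c
    fin_cases i <;> fin_cases j <;> simp [Matrix.single]
  -- the quaternion multiplication table
  obtain ⟨txx, tyy, tzz, txy, tyx, tyz, tzy, tzx, txz⟩ :
      Mx * Mx = -1 ∧ My * My = -1 ∧ Mz * Mz = -1 ∧ Mx * My = Mz ∧ My * Mx = -Mz ∧
      My * Mz = Mx ∧ Mz * My = -Mx ∧ Mz * Mx = My ∧ Mx * Mz = -My := by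
    refine ⟨?_, ?_, ?_, ?_, ?_, ?_, ?_, ?_, ?_⟩ <;>
    · simp only [hMx, hMy, hMz, qr_one_eq, sub_mul, add_mul, mul_sub, mul_add,
        Matrix.single_mul_single_same, Matrix.single_mul_single_of_ne, ne_eq, mul_one,
        Fin.isValue, neg_add_rev, neg_sub, Fin.reduceEq, not_false_eq_true]
      abel
  have quat := qr_quat_mul Mx My Mz cMx cMy cMz txx tyy tzz txy tyx tyz tzy tzx txz
  -- scalars
  set ε : A := algebraMap ℂ A (Complex.I * hbar) with hεd
  set η : A := algebraMap ℂ A (hbar ^ 2) with hηd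
  have hε : ∀ a : A, ε * a = a * ε := fun a => Algebra.commutes _ a
  have hη : ∀ a : A, η * a = a * η := fun a => Algebra.commutes _ a
  have hε2 : ε * ε = -η := by
    rw [hεd, hηd, ← map_mul, ← map_neg]
    congr 1
    linear_combination hbar ^ 2 * Complex.I_sq
  have sm : ∀ (c : ℂ) (M : Matrix (Fin 4) (Fin 4) A), c • M = algebraMap ℂ A c • M :=
    fun c M => (algebraMap_smul A c M).symm
  -- hypotheses in A-scalar form
  have hxyε : x * y - y * x = 2 * (ε * z) := by
    rw [hxy, Algebra.smul_def, show ((2 : ℂ) * Complex.I * hbar) = 2 * (Complex.I * hbar) from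
      by ring, map_mul, map_ofNat, ← hεd, mul_assoc]
  have hyzε : y * z - z * y = 2 * (ε * x) := by
    rw [hyz, Algebra.smul_def, show ((2 : ℂ) * Complex.I * hbar) = 2 * (Complex.I * hbar) from
      by ring, map_mul, map_ofNat, ← hεd, mul_assoc]
  have hzxε : z * x - x * z = 2 * (ε * y) := by
    rw [hzx, Algebra.smul_def, show ((2 : ℂ) * Complex.I * hbar) = 2 * (Complex.I * hbar) from
      by ring, map_mul, map_ofNat, ← hεd, mul_assoc]
  have hr2η : r ^ 2 = x ^ 2 + y ^ 2 + z ^ 2 + η := by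
    rw [hr2, Algebra.smul_def, mul_one, ← hηd]
  -- rinv commutes with x, y, z
  have hix : rinv * x = x * rinv := by
    calc rinv * x = rinv * x * (r * rinv) := by rw [hrinv, mul_one]
      _ = rinv * (x * r) * rinv := by noncomm_ring
      _ = rinv * (r * x) * rinv := by rw [hrx]
      _ = (rinv * r) * (x * rinv) := by noncomm_ring
      _ = x * rinv := by rw [hinvr, one_mul]
  have hiy : rinv * y = y * rinv := by
    calc rinv * y = rinv * y * (r * rinv) := by rw [hrinv, mul_one]
      _ = rinv * (y * r) * rinv := by noncomm_ring
      _ = rinv * (r * y) * rinv := by rw [hry]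
      _ = (rinv * r) * (y * rinv) := by noncomm_ring
      _ = y * rinv := by rw [hinvr, one_mul]
  have hiz : rinv * z = z * rinv := by
    calc rinv * z = rinv * z * (r * rinv) := by rw [hrinv, mul_one]
      _ = rinv * (z * r) * rinv := by noncomm_ring
      _ = rinv * (r * z) * rinv := by rw [hrz]
      _ = (rinv * r) * (z * rinv) := by noncomm_ring
      _ = z * rinv := by rw [hinvr, one_mul]
  -- (r + η·rinv) commutes with x, y, z
  have hcx : (r + η*rinv) * x = x * (r + η*rinv) := by
    linear_combination (norm := noncomm_ring) hrx + hη x * rinv + η * hix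
  have hcy : (r + η*rinv) * y = y * (r + η*rinv) := by
    linear_combination (norm := noncomm_ring) hry + hη y * rinv + η * hiy
  have hcz : (r + η*rinv) * z = z * (r + η*rinv) := by
    linear_combination (norm := noncomm_ring) hrz + hη z * rinv + η * hiz
  -- canonical forms
  have hcoef : (r ^ 2 + (hbar ^ 2) • (1 : A)) * rinv = r + η * rinv := by
    rw [Algebra.smul_def, mul_one, ← hηd]
    linear_combination (norm := noncomm_ring) r * hrinv
  have eX : X = x • (1 : Matrix (Fin 4) (Fin 4) A) + ε • Mx + (0:A) • My + (0:A) • Mz := by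
    rw [hX, sm, ← hεd]
    simp only [zero_smul, add_zero]
  have eY : Y = y • (1 : Matrix (Fin 4) (Fin 4) A) + (0:A) • Mx + ε • My + (0:A) • Mz := by
    rw [hY, sm, ← hεd]
    simp only [zero_smul, add_zero, zero_add]
  have eZ : Z = z • (1 : Matrix (Fin 4) (Fin 4) A) + (0:A) • Mx + (0:A) • My + ε • Mz := by
    rw [hZ, sm, ← hεd]
    simp only [zero_smul, add_zero, zero_add]
  have eN : rinv • N = (rinv*x) • Mx + (rinv*y) • My + (rinv*z) • Mz := by
    rw [hN, smul_add, smul_add, smul_smul, smul_smul, smul_smul]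
  have eRN : (Complex.I * hbar) • (rinv • N)
      = (ε*(rinv*x)) • Mx + (ε*(rinv*y)) • My + (ε*(rinv*z)) • Mz := by
    rw [eN, sm, ← hεd, smul_add, smul_add, smul_smul, smul_smul, smul_smul]
  have eR : R = (r + η*rinv) • (1 : Matrix (Fin 4) (Fin 4) A)
      + (ε*(rinv*x)) • Mx + (ε*(rinv*y)) • My + (ε*(rinv*z)) • Mz := by
    rw [hR, hcoef, eRN, ← add_assoc, ← add_assoc]
  refine ⟨?_, ?_, ?_, ?_⟩
  · -- R * X = X * R
    rw [eR, eX, quat, quat]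
    have e0 : (r+η*rinv) * x - (ε*(rinv*x)) * ε - (ε*(rinv*y)) * 0 - (ε*(rinv*z)) * 0
        = x * (r+η*rinv) - ε * (ε*(rinv*x)) - 0 * (ε*(rinv*y)) - 0 * (ε*(rinv*z)) := by
      linear_combination (norm := noncomm_ring) hcx + ε * hε (rinv*x)
    have e1 : (r+η*rinv) * ε + (ε*(rinv*x)) * x + (ε*(rinv*y)) * 0 - (ε*(rinv*z)) * 0
        = x * (ε*(rinv*x)) + ε * (r+η*rinv) + 0 * (ε*(rinv*z)) - 0 * (ε*(rinv*y)) := by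
      linear_combination (norm := noncomm_ring) -(hε (r+η*rinv)) + ε * hix * x + hε x * (rinv*x)
    have e2 : (r+η*rinv) * 0 + (ε*(rinv*y)) * x + (ε*(rinv*z)) * ε - (ε*(rinv*x)) * 0
        = x * (ε*(rinv*y)) + 0 * (r+η*rinv) + 0 * (ε*(rinv*x)) - ε * (ε*(rinv*z)) := by
      linear_combination (norm := noncomm_ring) hε x * (rinv*y) + ε * hix * y - ε * rinv * hxyε
        - ε * rinv * hε z + ε * hε rinv * z
    have e3 : (r+η*rinv) * 0 + (ε*(rinv*z)) * x + (ε*(rinv*x)) * 0 - (ε*(rinv*y)) * ε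
        = x * (ε*(rinv*z)) + 0 * (r+η*rinv) + ε * (ε*(rinv*y)) - 0 * (ε*(rinv*x)) := by
      linear_combination (norm := noncomm_ring) hε x * (rinv*z) + ε * hix * z + ε * rinv * hzxε
        + ε * rinv * hε y - ε * hε rinv * y
    rw [e0, e1, e2, e3]
  · -- R * Y = Y * R
    rw [eR, eY, quat, quat]
    have e0 : (r+η*rinv) * y - (ε*(rinv*x)) * 0 - (ε*(rinv*y)) * ε - (ε*(rinv*z)) * 0
        = y * (r+η*rinv) - 0 * (ε*(rinv*x)) - ε * (ε*(rinv*y)) - 0 * (ε*(rinv*z)) := by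
      linear_combination (norm := noncomm_ring) hcy + ε * hε (rinv*y)
    have e1 : (r+η*rinv) * 0 + (ε*(rinv*x)) * y + (ε*(rinv*y)) * 0 - (ε*(rinv*z)) * ε
        = y * (ε*(rinv*x)) + 0 * (r+η*rinv) + ε * (ε*(rinv*z)) - 0 * (ε*(rinv*y)) := by
      linear_combination (norm := noncomm_ring) hε y * (rinv*x) + ε * hiy * x + ε * rinv * hxyε
        + ε * rinv * hε z - ε * hε rinv * z
    have e2 : (r+η*rinv) * ε + (ε*(rinv*y)) * y + (ε*(rinv*z)) * 0 - (ε*(rinv*x)) * 0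
        = y * (ε*(rinv*y)) + ε * (r+η*rinv) + 0 * (ε*(rinv*x)) - 0 * (ε*(rinv*z)) := by
      linear_combination (norm := noncomm_ring) -(hε (r+η*rinv)) + ε * hiy * y + hε y * (rinv*y)
    have e3 : (r+η*rinv) * 0 + (ε*(rinv*z)) * y + (ε*(rinv*x)) * ε - (ε*(rinv*y)) * 0
        = y * (ε*(rinv*z)) + 0 * (r+η*rinv) + 0 * (ε*(rinv*y)) - ε * (ε*(rinv*x)) := by
      linear_combination (norm := noncomm_ring) hε y * (rinv*z) + ε * hiy * z - ε * rinv * hyzε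
        - ε * rinv * hε x + ε * hε rinv * x
    rw [e0, e1, e2, e3]
  · -- R * Z = Z * R
    rw [eR, eZ, quat, quat]
    have e0 : (r+η*rinv) * z - (ε*(rinv*x)) * 0 - (ε*(rinv*y)) * 0 - (ε*(rinv*z)) * ε
        = z * (r+η*rinv) - 0 * (ε*(rinv*x)) - 0 * (ε*(rinv*y)) - ε * (ε*(rinv*z)) := by
      linear_combination (norm := noncomm_ring) hcz + ε * hε (rinv*z)
    have e1 : (r+η*rinv) * 0 + (ε*(rinv*x)) * z + (ε*(rinv*y)) * ε - (ε*(rinv*z)) * 0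
        = z * (ε*(rinv*x)) + 0 * (r+η*rinv) + 0 * (ε*(rinv*z)) - ε * (ε*(rinv*y)) := by
      linear_combination (norm := noncomm_ring) hε z * (rinv*x) + ε * hiz * x - ε * rinv * hzxε
        - ε * rinv * hε y + ε * hε rinv * y
    have e2 : (r+η*rinv) * 0 + (ε*(rinv*y)) * z + (ε*(rinv*z)) * 0 - (ε*(rinv*x)) * ε
        = z * (ε*(rinv*y)) + 0 * (r+η*rinv) + ε * (ε*(rinv*x)) - 0 * (ε*(rinv*z)) := by
      linear_combination (norm := noncomm_ring) hε z * (rinv*y) + ε * hiz * y + ε * rinv * hyzε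
        + ε * rinv * hε x - ε * hε rinv * x
    have e3 : (r+η*rinv) * ε + (ε*(rinv*z)) * z + (ε*(rinv*x)) * 0 - (ε*(rinv*y)) * 0
        = z * (ε*(rinv*z)) + ε * (r+η*rinv) + 0 * (ε*(rinv*y)) - 0 * (ε*(rinv*x)) := by
      linear_combination (norm := noncomm_ring) -(hε (r+η*rinv)) + ε * hiz * z + hε z * (rinv*z)
    rw [e0, e1, e2, e3]
  · -- R² = X² + Y² + Z² + ħ²·1
    rw [pow_two, pow_two, pow_two, pow_two, eR, eX, eY, eZ, quat, quat, quat, quat, sm, ← hηd]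
    have g0 : (r + η*rinv) * (r + η*rinv) - (ε*(rinv*x)) * (ε*(rinv*x))
          - (ε*(rinv*y)) * (ε*(rinv*y)) - (ε*(rinv*z)) * (ε*(rinv*z))
        = (x*x - ε*ε - 0*0 - 0*0) + (y*y - 0*0 - ε*ε - 0*0) + (z*z - 0*0 - 0*0 - ε*ε) + η := by
      linear_combination (norm := noncomm_ring)
        -(hη r)*rinv + η*hrinv + η*hinvr - η*(hη rinv)*rinv
        + ε*rinv*(hε x)*(rinv*x) + ε*(hε rinv)*(x*(rinv*x)) + ε*ε*rinv*hix*x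
        - hε2*((rinv*rinv)*(x*x))
        + ε*rinv*(hε y)*(rinv*y) + ε*(hε rinv)*(y*(rinv*y)) + ε*ε*rinv*hiy*y
        - hε2*((rinv*rinv)*(y*y))
        + ε*rinv*(hε z)*(rinv*z) + ε*(hε rinv)*(z*(rinv*z)) + ε*ε*rinv*hiz*z
        - hε2*((rinv*rinv)*(z*z))
        - η*(rinv*rinv)*hr2η
        + η*rinv*hinvr*r + η*hinvr
        + η*(hη rinv)*rinv + η*rinv*(hη rinv)
        + hr2η + 3*hε2
    have g1 : (r + η*rinv) * (ε*(rinv*x)) + (ε*(rinv*x)) * (r + η*rinv)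
          + (ε*(rinv*y)) * (ε*(rinv*z)) - (ε*(rinv*z)) * (ε*(rinv*y))
        = (x*ε + ε*x + 0*0 - 0*0) + (y*0 + 0*y + ε*0 - 0*ε) + (z*0 + 0*z + 0*0 - ε*0) := by
      linear_combination (norm := noncomm_ring)
        -(hε r)*(rinv*x) + ε*hrinv*x
        - η*(hε rinv)*(rinv*x) - (hε η)*(rinv*(rinv*x))
        - ε*rinv*hrx + ε*hinvr*x
        - ε*rinv*(hη x)*rinv - ε*(hη rinv)*(x*rinv) - ε*η*rinv*hix
        - ε*rinv*(hε y)*(rinv*z) - ε*(hε rinv)*(y*(rinv*z)) - ε*ε*rinv*hiy*z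
        + ε*rinv*(hε z)*(rinv*y) + ε*(hε rinv)*(z*(rinv*y)) + ε*ε*rinv*hiz*y
        + ε*ε*(rinv*rinv)*hyzε
        - 2*(ε*ε*rinv*(hε rinv)*x) - 2*(ε*ε*(hε rinv)*(rinv*x))
        + 2*(hε2*(ε*((rinv*rinv)*x))) + 2*((hε η)*(rinv*(rinv*x)))
        + hε x
    have g2 : (r + η*rinv) * (ε*(rinv*y)) + (ε*(rinv*y)) * (r + η*rinv)
          + (ε*(rinv*z)) * (ε*(rinv*x)) - (ε*(rinv*x)) * (ε*(rinv*z))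
        = (x*0 + 0*x + 0*ε - ε*0) + (y*ε + ε*y + 0*0 - 0*0) + (z*0 + 0*z + ε*0 - 0*ε) := by
      linear_combination (norm := noncomm_ring)
        -(hε r)*(rinv*y) + ε*hrinv*y
        - η*(hε rinv)*(rinv*y) - (hε η)*(rinv*(rinv*y))
        - ε*rinv*hry + ε*hinvr*y
        - ε*rinv*(hη y)*rinv - ε*(hη rinv)*(y*rinv) - ε*η*rinv*hiy
        - ε*rinv*(hε z)*(rinv*x) - ε*(hε rinv)*(z*(rinv*x)) - ε*ε*rinv*hiz*x
        + ε*rinv*(hε x)*(rinv*z) + ε*(hε rinv)*(x*(rinv*z)) + ε*ε*rinv*hix*z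
        + ε*ε*(rinv*rinv)*hzxε
        - 2*(ε*ε*rinv*(hε rinv)*y) - 2*(ε*ε*(hε rinv)*(rinv*y))
        + 2*(hε2*(ε*((rinv*rinv)*y))) + 2*((hε η)*(rinv*(rinv*y)))
        + hε y
    have g3 : (r + η*rinv) * (ε*(rinv*z)) + (ε*(rinv*z)) * (r + η*rinv)
          + (ε*(rinv*x)) * (ε*(rinv*y)) - (ε*(rinv*y)) * (ε*(rinv*x))
        = (x*0 + 0*x + ε*0 - 0*ε) + (y*0 + 0*y + 0*ε - ε*0) + (z*ε + ε*z + 0*0 - 0*0) := by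
      linear_combination (norm := noncomm_ring)
        -(hε r)*(rinv*z) + ε*hrinv*z
        - η*(hε rinv)*(rinv*z) - (hε η)*(rinv*(rinv*z))
        - ε*rinv*hrz + ε*hinvr*z
        - ε*rinv*(hη z)*rinv - ε*(hη rinv)*(z*rinv) - ε*η*rinv*hiz
        - ε*rinv*(hε x)*(rinv*y) - ε*(hε rinv)*(x*(rinv*y)) - ε*ε*rinv*hix*y
        + ε*rinv*(hε y)*(rinv*x) + ε*(hε rinv)*(y*(rinv*x)) + ε*ε*rinv*hiy*x
        + ε*ε*(rinv*rinv)*hxyε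
        - 2*(ε*ε*rinv*(hε rinv)*z) - 2*(ε*ε*(hε rinv)*(rinv*z))
        + 2*(hε2*(ε*((rinv*rinv)*z))) + 2*((hε η)*(rinv*(rinv*z)))
        + hε z
    rw [g0, g1, g2, g3]
    simp only [add_smul, mul_zero, zero_mul, add_zero, zero_add, sub_zero, zero_smul, smul_zero]
    abel
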